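/- If an equilateral triangle has all vertices in ℤ³, then its side length is of the form √(2(m² − mn + n²)) for some integers m, n. -/

import Mathlib

/-- Eisenstein integers `a + b ω` where `ω^2 + ω + 1 = 0`. -/
@[ext]
structure Eis : Type where
  re : ℤ
  im : ℤ
  deriving DecidableEq

namespace Eis

instance : Zero Eis := ⟨⟨0, 0⟩⟩
instance : One Eis := ⟨⟨1, 0⟩⟩
instance : Add Eis := ⟨fun z w => ⟨z.re + w.re, z.im + w.im⟩⟩
instance : Neg Eis := ⟨fun z => ⟨-z.re, -z.im⟩⟩
instance : Mul Eis :=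
  ⟨fun z w => ⟨z.re * w.re - z.im * w.im, z.re * w.im + z.im * w.re - z.im * w.im⟩⟩

@[simp] theorem zero_re : (0 : Eis).re = 0 := rfl
@[simp] theorem zero_im : (0 : Eis).im = 0 := rfl
@[simp] theorem one_re : (1 : Eis).re = 1 := rfl
@[simp] theorem one_im : (1 : Eis).im = 0 := rfl
@[simp] theorem add_re (z w : Eis) : (z + w).re = z.re + w.re := rfl
@[simp] theorem add_im (z w : Eis) : (z + w).im = z.im + w.im := rfl
@[simp] theorem neg_re (z : Eis) : (-z).re = -z.re := rfl
@[simp] theorem neg_im (z : Eis) : (-z).im = -z.im := rfl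
@[simp] theorem mul_re (z w : Eis) : (z * w).re = z.re * w.re - z.im * w.im := rfl
@[simp] theorem mul_im (z w : Eis) :
    (z * w).im = z.re * w.im + z.im * w.re - z.im * w.im := rfl

instance addCommGroup : AddCommGroup Eis := by
  refine
  { add := (· + ·)
    zero := (0 : Eis)
    sub := fun a b => a + -b
    neg := Neg.neg
    nsmul := @nsmulRec Eis ⟨0⟩ ⟨(· + ·)⟩
    zsmul := @zsmulRec Eis ⟨0⟩ ⟨(· + ·)⟩ ⟨Neg.neg⟩ (@nsmulRec Eis ⟨0⟩ ⟨(· + ·)⟩)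
    add_assoc := ?_
    zero_add := ?_
    add_zero := ?_
    neg_add_cancel := ?_
    add_comm := ?_ } <;>
  intros <;>
  ext <;>
  simp <;>
  ring

@[simp] theorem sub_re (z w : Eis) : (z - w).re = z.re - w.re := rfl
@[simp] theorem sub_im (z w : Eis) : (z - w).im = z.im - w.im := rfl

instance addGroupWithOne : AddGroupWithOne Eis :=
  { Eis.addCommGroup with
    natCast := fun n => ⟨n, 0⟩
    intCast := fun n => ⟨n, 0⟩
    one := 1 }

instance commRing : CommRing Eis := by
  refine
  { Eis.addGroupWithOne with
    mul := (· * ·)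
    npow := @npowRec Eis ⟨1⟩ ⟨(· * ·)⟩,
    add_comm := ?_
    left_distrib := ?_
    right_distrib := ?_
    zero_mul := ?_
    mul_zero := ?_
    mul_assoc := ?_
    one_mul := ?_
    mul_one := ?_
    mul_comm := ?_ } <;>
  intros <;>
  ext <;>
  simp <;>
  ring

@[simp] theorem intCast_re (n : ℤ) : (n : Eis).re = n := rfl
@[simp] theorem intCast_im (n : ℤ) : (n : Eis).im = 0 := rfl

/-- Conjugation. -/
def conj (z : Eis) : Eis := ⟨z.re - z.im, -z.im⟩

@[simp] theorem conj_re (z : Eis) : (conj z).re = z.re - z.im := rfl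
@[simp] theorem conj_im (z : Eis) : (conj z).im = -z.im := rfl

/-- The norm `a^2 - a*b + b^2`. -/
def norm (z : Eis) : ℤ := z.re ^ 2 - z.re * z.im + z.im ^ 2

theorem norm_mul (z w : Eis) : norm (z * w) = norm z * norm w := by
  simp [norm]; ring

theorem norm_nonneg (z : Eis) : 0 ≤ norm z := by
  have h := sq_nonneg (2 * z.re - z.im)
  have h2 := sq_nonneg z.im
  simp only [norm]; nlinarith

theorem norm_eq_zero_iff {z : Eis} : norm z = 0 ↔ z = 0 := by
  constructor
  · intro h
    simp only [norm] at h
    have h1 := sq_nonneg (2 * z.re - z.im)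
    have h2 := sq_nonneg z.im
    ext
    · show z.re = 0
      nlinarith [sq_nonneg (2 * z.im - z.re)]
    · show z.im = 0
      nlinarith [sq_nonneg (2 * z.im - z.re)]
  · rintro rfl; simp [norm]

theorem mul_conj (z : Eis) : z * conj z = (norm z : Eis) := by
  ext <;> simp only [mul_re, mul_im, conj_re, conj_im, intCast_re, intCast_im, norm] <;> ring

theorem norm_conj (z : Eis) : norm (conj z) = norm z := by simp [norm]; ring

instance : Nontrivial Eis := ⟨⟨0, 1, by decide⟩⟩

instance : NoZeroDivisors Eis where
  eq_zero_or_eq_zero_of_mul_eq_zero {a b} h := by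
    have : norm a * norm b = 0 := by rw [← norm_mul, h]; simp [norm]
    rcases mul_eq_zero.mp this with h' | h'
    · exact Or.inl (norm_eq_zero_iff.mp h')
    · exact Or.inr (norm_eq_zero_iff.mp h')

instance : IsDomain Eis := NoZeroDivisors.to_isDomain _


instance : Div Eis :=
  ⟨fun x y =>
    ⟨round (((x * conj y).re : ℚ) / (norm y : ℚ)),
     round (((x * conj y).im : ℚ) / (norm y : ℚ))⟩⟩

theorem div_def (x y : Eis) :
    x / y = ⟨round (((x * conj y).re : ℚ) / (norm y : ℚ)),
             round (((x * conj y).im : ℚ) / (norm y : ℚ))⟩ := rfl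

instance : Mod Eis := ⟨fun x y => x - y * (x / y)⟩

theorem mod_def (x y : Eis) : x % y = x - y * (x / y) := rfl

theorem abs_intRound_sub (a n : ℤ) (hn : 0 < n) :
    |(a : ℚ) - (n : ℚ) * round ((a : ℚ) / (n : ℚ))| ≤ (n : ℚ) / 2 := by
  have hn' : (0 : ℚ) < (n : ℚ) := by exact_mod_cast hn
  have h := abs_sub_round ((a : ℚ) / (n : ℚ))
  have heq : (a : ℚ) - (n : ℚ) * round ((a : ℚ) / (n : ℚ))
      = (n : ℚ) * ((a : ℚ) / (n : ℚ) - round ((a : ℚ) / (n : ℚ))) := by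
    field_simp
  rw [heq, abs_mul, abs_of_pos hn']
  calc (n : ℚ) * |(a : ℚ) / (n : ℚ) - round ((a : ℚ) / (n : ℚ))|
      ≤ (n : ℚ) * (1 / 2) := by
        exact mul_le_mul_of_nonneg_left h (le_of_lt hn')
    _ = (n : ℚ) / 2 := by ring

theorem norm_mod_lt (x : Eis) {y : Eis} (hy : y ≠ 0) : (x % y).norm < y.norm := by
  have npos : 0 < norm y := lt_of_le_of_ne (norm_nonneg y) (fun h => hy (norm_eq_zero_iff.mp h.symm))
  set c := x * conj y with hc
  set q := x / y with hq
  set s : Eis := c - (norm y : Eis) * q with hs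
  have key : conj y * (x % y) = s := by
    rw [mod_def, hs, hc]
    have : conj y * y = (norm y : Eis) := by rw [mul_comm]; exact mul_conj y
    calc conj y * (x - y * q) = x * conj y - (conj y * y) * q := by ring
      _ = x * conj y - (norm y : Eis) * q := by rw [this]
  have hnorms : norm y * norm (x % y) = norm s := by
    rw [← key, norm_mul, norm_conj]
  have hsre : s.re = c.re - norm y * q.re := by simp [hs]
  have hsim : s.im = c.im - norm y * q.im := by simp [hs]
  have hqre : q.re = round ((c.re : ℚ) / (norm y : ℚ)) := by rw [hq, div_def]
  have hqim : q.im = round ((c.im : ℚ) / (norm y : ℚ)) := by rw [hq, div_def]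
  have h1 : |(s.re : ℚ)| ≤ ((norm y : ℚ)) / 2 := by
    rw [hsre, hqre]; push_cast
    exact abs_intRound_sub c.re (norm y) npos
  have h2 : |(s.im : ℚ)| ≤ ((norm y : ℚ)) / 2 := by
    rw [hsim, hqim]; push_cast
    exact abs_intRound_sub c.im (norm y) npos
  have hn1 : (1 : ℚ) ≤ (norm y : ℚ) := by exact_mod_cast npos
  have hlt : (norm s : ℚ) < (norm y : ℚ) * (norm y : ℚ) := by
    have hexp : (norm s : ℚ) = (s.re : ℚ) ^ 2 - (s.re : ℚ) * (s.im : ℚ) + (s.im : ℚ) ^ 2 := by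
      rw [norm]; push_cast; ring
    have e1 : (s.re : ℚ) ^ 2 = |(s.re : ℚ)| ^ 2 := (sq_abs _).symm
    have e2 : (s.im : ℚ) ^ 2 = |(s.im : ℚ)| ^ 2 := (sq_abs _).symm
    have e3 : -((s.re : ℚ) * (s.im : ℚ)) ≤ |(s.re : ℚ)| * |(s.im : ℚ)| := by
      rw [← abs_mul]
      have := neg_abs_le ((s.re : ℚ) * (s.im : ℚ))
      linarith [abs_nonneg ((s.re : ℚ) * (s.im : ℚ)), neg_le_abs ((s.re : ℚ) * (s.im : ℚ))]
    nlinarith [abs_nonneg (s.re : ℚ), abs_nonneg (s.im : ℚ), h1, h2]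
  have hfin : (norm y : ℚ) * (norm (x % y) : ℚ) < (norm y : ℚ) * (norm y : ℚ) := by
    have : (norm y * norm (x % y) : ℤ) = norm s := hnorms
    calc (norm y : ℚ) * (norm (x % y) : ℚ) = ((norm y * norm (x % y) : ℤ) : ℚ) := by push_cast; ring
      _ = (norm s : ℚ) := by rw [this]
      _ < _ := hlt
  have : (norm (x % y) : ℚ) < (norm y : ℚ) := by
    have hn' : (0 : ℚ) < (norm y : ℚ) := by exact_mod_cast npos
    exact lt_of_mul_lt_mul_left hfin (le_of_lt hn')
  exact_mod_cast this

theorem natAbs_norm_mod_lt (x : Eis) {y : Eis} (hy : y ≠ 0) :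
    (x % y).norm.natAbs < y.norm.natAbs := by
  have := norm_mod_lt x hy
  have h1 := norm_nonneg (x % y)
  have h2 := norm_nonneg y
  omega

theorem natAbs_norm_le_mul_left (x : Eis) {y : Eis} (hy : y ≠ 0) :
    (norm x).natAbs ≤ (norm (x * y)).natAbs := by
  rw [norm_mul, Int.natAbs_mul]
  have : 0 < norm y := lt_of_le_of_ne (norm_nonneg y) (fun h => hy (norm_eq_zero_iff.mp h.symm))
  have : 1 ≤ (norm y).natAbs := by omega
  exact Nat.le_mul_of_pos_right _ (by omega)

instance : EuclideanDomain Eis :=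
  { Eis.commRing, (inferInstance : Nontrivial Eis) with
    quotient := (· / ·)
    remainder := (· % ·)
    quotient_zero := fun x => by
      ext <;> simp [div_def, norm]
    quotient_mul_add_remainder_eq := fun x y => by
      change y * (x / y) + (x - y * (x / y)) = x; ring
    r := fun a b => a.norm.natAbs < b.norm.natAbs
    r_wellFounded := (measure (fun (z : Eis) => z.norm.natAbs)).wf
    remainder_lt := fun x y hy => natAbs_norm_mod_lt x hy
    mul_left_not_lt := fun a b hb0 => not_lt_of_ge (natAbs_norm_le_mul_left a hb0) }


attribute [local instance] UniqueFactorizationMonoid.toGCDMonoid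

theorem norm_one' : norm (1 : Eis) = 1 := by simp [norm]

theorem norm_eq_one_of_isUnit {z : Eis} (h : IsUnit z) : norm z = 1 := by
  obtain ⟨w, hw⟩ := h.exists_right_inv
  have h1 : norm z * norm w = 1 := by rw [← norm_mul, hw, norm_one']
  exact Int.eq_one_of_mul_eq_one_right (norm_nonneg z) h1

theorem isUnit_of_norm_eq_one {z : Eis} (h : norm z = 1) : IsUnit z := by
  refine IsUnit.of_mul_eq_one (a := z) (conj z) ?_
  rw [mul_conj, h]; norm_num

theorem two_def : (2 : Eis) = ⟨2, 0⟩ := by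
  have : (2 : Eis) = 1 + 1 := by norm_num
  rw [this]; ext <;> simp

theorem three_def : (3 : Eis) = ⟨3, 0⟩ := by
  have : (3 : Eis) = 1 + 1 + 1 := by norm_num
  rw [this]; ext <;> simp

theorem norm_two : norm (2 : Eis) = 4 := by rw [two_def]; simp [norm]

theorem norm_three : norm (3 : Eis) = 9 := by rw [three_def]; simp [norm]

theorem norm_ne_two (z : Eis) : norm z ≠ 2 := by
  intro h
  rw [norm] at h
  have h4 : ∀ a b : ZMod 4, a ^ 2 - a * b + b ^ 2 ≠ 2 := by decide
  apply h4 (z.re : ZMod 4) (z.im : ZMod 4)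
  have := congrArg (fun n : ℤ => (n : ZMod 4)) h
  push_cast at this
  exact this

theorem prime_two : Prime (2 : Eis) := by
  rw [← UniqueFactorizationMonoid.irreducible_iff_prime]
  constructor
  · intro h
    have := norm_eq_one_of_isUnit h
    rw [norm_two] at this; omega
  · intro a b hab
    have hn : (4 : ℤ) = norm a * norm b := by rw [← norm_mul, ← hab, norm_two]
    have ha := norm_nonneg a
    have hb := norm_nonneg b
    have hA2 := norm_ne_two a
    have hd : norm a ∣ 4 := ⟨norm b, hn⟩
    have hne : norm a ≠ 0 := by
      intro h0; rw [h0] at hn; simp at hn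
    have hle : norm a ≤ 4 := Int.le_of_dvd (by norm_num) hd
    set A := norm a with hA
    have : A = 1 ∨ A = 4 := by
      have h1 : 1 ≤ A := by omega
      interval_cases A <;> omega
    rcases this with h1 | h4
    · exact Or.inl (isUnit_of_norm_eq_one h1)
    · right
      rw [h4] at hn
      have : norm b = 1 := by omega
      exact isUnit_of_norm_eq_one this

theorem aux3 {x : ℤ} (h : (x : ZMod 9) = 0 ∨ (x : ZMod 9) = 3 ∨ (x : ZMod 9) = 6) :
    3 ∣ x := by
  rcases h with h | h | h
  · have := (ZMod.intCast_zmod_eq_zero_iff_dvd x 9).mp h; omega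
  · have h' : ((x - 3 : ℤ) : ZMod 9) = 0 := by push_cast [h]; decide
    have := (ZMod.intCast_zmod_eq_zero_iff_dvd (x - 3) 9).mp h'; omega
  · have h' : ((x - 6 : ℤ) : ZMod 9) = 0 := by push_cast [h]; decide
    have := (ZMod.intCast_zmod_eq_zero_iff_dvd (x - 6) 9).mp h'; omega

theorem three_dvd_of_nine_dvd_norm {z : Eis} (h : (9 : ℤ) ∣ norm z) :
    ∃ w : Eis, z = 3 * w := by
  have key : ∀ a b : ZMod 9, a ^ 2 - a * b + b ^ 2 = 0 →
      (a = 0 ∨ a = 3 ∨ a = 6) ∧ (b = 0 ∨ b = 3 ∨ b = 6) := by decide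
  have h0 : ((norm z : ℤ) : ZMod 9) = 0 := (ZMod.intCast_zmod_eq_zero_iff_dvd _ _).mpr h
  rw [norm] at h0; push_cast at h0
  obtain ⟨ha, hb⟩ := key _ _ h0
  obtain ⟨r, hr⟩ := aux3 ha
  obtain ⟨m, hm⟩ := aux3 hb
  refine ⟨⟨r, m⟩, ?_⟩
  rw [three_def]
  ext <;> simp <;> omega

theorem norm_zero : norm (0 : Eis) = 0 := by simp [norm]

theorem norm_intCast (n : ℤ) : norm (n : Eis) = n ^ 2 := by simp [norm]

theorem norm_pow_two (z : Eis) : norm (z ^ 2) = norm z ^ 2 := by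
  rw [pow_two, pow_two, norm_mul]

theorem norm_neg' (z : Eis) : norm (-z) = norm z := by
  have : (-z : Eis) = -1 * z := by ring
  rw [this, norm_mul]; simp [norm]

theorem norm_of_associated {x y : Eis} (h : Associated x y) : norm x = norm y := by
  obtain ⟨u, hu⟩ := h
  rw [← hu, norm_mul, norm_eq_one_of_isUnit u.isUnit, mul_one]

theorem sq_shape' {u2 f1 g1 : Eis} (hco : IsUnit (gcd f1 g1))
    (hfg : f1 * g1 = -(2 * u2 ^ 2)) (h2f : (2 : Eis) ∣ f1) :
    ∃ A B : ℤ, 0 ≤ A ∧ 0 ≤ B ∧ norm f1 = 4 * A ^ 2 ∧ norm g1 = B ^ 2 ∧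
      norm u2 = A * B := by
  obtain ⟨f2, rfl⟩ := h2f
  have h2 : (2 : Eis) ≠ 0 := by
    intro h; have := congrArg norm h; rw [norm_two, norm_zero] at this; omega
  have hfg2 : f2 * -g1 = u2 ^ 2 := by
    have h' : (2 : Eis) * (f2 * -g1) = 2 * u2 ^ 2 := by linear_combination -hfg
    exact mul_left_cancel₀ h2 h'
  have hco2 : IsUnit (gcd f2 (-g1)) := by
    apply isUnit_of_dvd_unit ?_ hco
    apply dvd_gcd
    · exact (gcd_dvd_left f2 (-g1)).trans (dvd_mul_left f2 2)
    · exact (gcd_dvd_right f2 (-g1)).trans (neg_dvd.mpr dvd_rfl)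
  obtain ⟨α, hα⟩ := exists_associated_pow_of_mul_eq_pow hco2 hfg2
  have hco3 : IsUnit (gcd (-g1) f2) := (gcd_comm' f2 (-g1)).isUnit hco2
  obtain ⟨β, hβ⟩ := exists_associated_pow_of_mul_eq_pow hco3
    (show -g1 * f2 = u2 ^ 2 by linear_combination hfg2)
  have e1 : norm f2 = norm α ^ 2 := by rw [← norm_of_associated hα, norm_pow_two]
  have e2 : norm g1 = norm β ^ 2 := by
    rw [← norm_neg' g1, ← norm_of_associated hβ, norm_pow_two]
  refine ⟨norm α, norm β, norm_nonneg α, norm_nonneg β, ?_, e2, ?_⟩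
  · rw [norm_mul, norm_two, e1]
  · have hsq : norm u2 ^ 2 = (norm α * norm β) ^ 2 := by
      have h' : norm (u2 ^ 2) = norm f2 * norm (-g1) := by rw [← hfg2, norm_mul]
      rw [norm_pow_two, e1, norm_neg' g1, e2] at h'
      rw [h']; ring
    have h0 : (norm u2 - norm α * norm β) * (norm u2 + norm α * norm β) = 0 := by
      linear_combination hsq
    have hAB : 0 ≤ norm α * norm β := mul_nonneg (norm_nonneg α) (norm_nonneg β)
    have hu2 := norm_nonneg u2
    rcases mul_eq_zero.mp h0 with h' | h'
    · linarith
    · linarith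

theorem sq_shape {u1 f1 g1 : Eis} (hco : IsUnit (gcd f1 g1))
    (h : u1 ^ 2 = -(2 * (f1 * g1))) :
    ∃ C : ℤ, 0 ≤ C ∧ norm u1 + norm f1 + norm g1 = C ^ 2 := by
  have h2u : (2 : Eis) ∣ u1 := by
    apply prime_two.dvd_of_dvd_pow (n := 2)
    exact ⟨-(f1 * g1), by linear_combination h⟩
  obtain ⟨u2, rfl⟩ := h2u
  have h2 : (2 : Eis) ≠ 0 := by
    intro h'; have := congrArg norm h'; rw [norm_two, norm_zero] at this; omega
  have hfg : f1 * g1 = -(2 * u2 ^ 2) := by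
    have h' : (2 : Eis) * (f1 * g1) = 2 * -(2 * u2 ^ 2) := by linear_combination h
    exact mul_left_cancel₀ h2 h'
  have hdvd : (2 : Eis) ∣ f1 * g1 := ⟨-(u2 ^ 2), by rw [hfg]; ring⟩
  have hnu : norm (2 * u2) = 4 * norm u2 := by rw [norm_mul, norm_two]
  rcases (prime_two.2.2 _ _ hdvd) with h2f | h2g
  · obtain ⟨A, B, hA, hB, e1, e2, e3⟩ := sq_shape' hco hfg h2f
    exact ⟨2 * A + B, by linarith, by rw [hnu, e1, e2, e3]; ring⟩
  · have hco' : IsUnit (gcd g1 f1) := (gcd_comm' f1 g1).isUnit hco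
    obtain ⟨A, B, hA, hB, e1, e2, e3⟩ := sq_shape' (u2 := u2) (f1 := g1) (g1 := f1) hco'
      (show g1 * f1 = -(2 * u2 ^ 2) by linear_combination hfg) h2g
    exact ⟨2 * A + B, by linarith, by rw [hnu, e1, e2, e3]; ring⟩

theorem crux {t : ℤ} {u f g : Eis} (h : u ^ 2 + 2 * (f * g) = 0)
    (hsum : norm u + norm f + norm g = 9 * t) :
    ∃ m n : ℤ, t = m ^ 2 - m * n + n ^ 2 := by
  by_cases hf : f = 0
  · subst hf
    have hu : u = 0 := by
      have : u ^ 2 = 0 := by linear_combination h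
      exact pow_eq_zero_iff (two_ne_zero) |>.mp this
    subst hu
    rw [norm_zero] at hsum
    have h9 : (9 : ℤ) ∣ norm g := ⟨t, by linarith⟩
    obtain ⟨w, rfl⟩ := three_dvd_of_nine_dvd_norm h9
    rw [norm_mul, norm_three] at hsum
    refine ⟨w.re, w.im, ?_⟩
    have hw : norm w = t := by linarith
    rw [← hw]; rfl
  by_cases hg : g = 0
  · subst hg
    have hu : u = 0 := by
      have : u ^ 2 = 0 := by linear_combination h
      exact pow_eq_zero_iff (two_ne_zero) |>.mp this
    subst hu
    rw [norm_zero] at hsum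
    have h9 : (9 : ℤ) ∣ norm f := ⟨t, by linarith⟩
    obtain ⟨w, rfl⟩ := three_dvd_of_nine_dvd_norm h9
    rw [norm_mul, norm_three] at hsum
    refine ⟨w.re, w.im, ?_⟩
    have hw : norm w = t := by linarith
    rw [← hw]; rfl
  -- main case
  obtain ⟨f1, g1, hf1, hg1, hco⟩ := extract_gcd f g
  obtain ⟨d, hd⟩ : ∃ d : Eis, gcd f g = d := ⟨_, rfl⟩
  rw [hd] at hf1 hg1
  subst hf1
  subst hg1
  have hdne : d ≠ 0 := left_ne_zero_of_mul hf
  have hdu : d ∣ u := by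
    have hsq : u ^ 2 = d ^ 2 * (-(2 * (f1 * g1))) := by linear_combination h
    have hdd : d ^ 2 ∣ u ^ 2 := ⟨_, hsq⟩
    exact (IsIntegrallyClosed.pow_dvd_pow_iff two_ne_zero).mp hdd
  obtain ⟨u1, rfl⟩ := hdu
  have hu1 : u1 ^ 2 = -(2 * (f1 * g1)) := by
    have hd2 : d ^ 2 ≠ 0 := pow_ne_zero _ hdne
    apply mul_left_cancel₀ hd2
    linear_combination h
  obtain ⟨C, hC0, hCsum⟩ := sq_shape hco hu1
  rw [norm_mul, norm_mul, norm_mul] at hsum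
  have hsum2 : 9 * t = norm d * C ^ 2 := by
    linear_combination -hsum + norm d * hCsum
  by_cases h3 : (3 : ℤ) ∣ C
  · obtain ⟨C1, rfl⟩ := h3
    have h9' : 9 * t = 9 * (norm d * C1 ^ 2) := by linear_combination hsum2
    have ht : t = norm d * C1 ^ 2 := by linarith
    refine ⟨(d * (C1 : Eis)).re, (d * (C1 : Eis)).im, ?_⟩
    have hn : norm (d * (C1 : Eis)) = norm d * C1 ^ 2 := by
      rw [norm_mul, norm_intCast]
    rw [ht, ← hn]; rfl
  · have p3 : Prime (3 : ℤ) := Int.prime_three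
    have h3C2 : ¬ (3 : ℤ) ∣ C ^ 2 := fun hh => h3 (p3.dvd_of_dvd_pow hh)
    have hdvd3 : (3 : ℤ) ∣ norm d * C ^ 2 := ⟨3 * t, by linarith⟩
    have h3d : (3 : ℤ) ∣ norm d := ((p3.dvd_mul).mp hdvd3).resolve_right h3C2
    obtain ⟨e, he⟩ := h3d
    have h3e : 3 * t = e * C ^ 2 := by rw [he] at hsum2; linarith
    have h3e' : (3 : ℤ) ∣ e := ((p3.dvd_mul).mp ⟨t, h3e.symm⟩).resolve_right h3C2
    obtain ⟨e1, rfl⟩ := h3e'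
    have h9d : (9 : ℤ) ∣ norm d := ⟨e1, by rw [he]; ring⟩
    obtain ⟨d1, hd3⟩ := three_dvd_of_nine_dvd_norm h9d
    have hnd : norm d = 9 * norm d1 := by rw [hd3, norm_mul, norm_three]
    have he1 : norm d1 = e1 := by rw [hnd] at he; linarith
    have ht : t = norm d1 * C ^ 2 := by rw [he1]; linarith
    refine ⟨(d1 * (C : Eis)).re, (d1 * (C : Eis)).im, ?_⟩
    have hn : norm (d1 * (C : Eis)) = norm d1 * C ^ 2 := by
      rw [norm_mul, norm_intCast]
    rw [ht, ← hn]; rfl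

end Eis

/-- Squared Euclidean distance between two points of `ℤ³`. -/
def d2 (P Q : ℤ × ℤ × ℤ) : ℤ :=
  (P.1 - Q.1) ^ 2 + (P.2.1 - Q.2.1) ^ 2 + (P.2.2 - Q.2.2) ^ 2

theorem side_form (P Q R : ℤ × ℤ × ℤ)
    (hPQ : P ≠ Q) (hQR : Q ≠ R) (hPR : P ≠ R)
    (h1 : d2 P Q = d2 Q R) (h2 : d2 Q R = d2 P R) :
    ∃ m n : ℤ, d2 P Q = 2 * (m ^ 2 - m * n + n ^ 2) := by
  simp only [d2] at h1 h2 ⊢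
  obtain ⟨t, ht⟩ : ∃ t, (P.1 - Q.1) * (P.1 - R.1) + (P.2.1 - Q.2.1) * (P.2.1 - R.2.1)
      + (P.2.2 - Q.2.2) * (P.2.2 - R.2.2) = t := ⟨_, rfl⟩
  have hA : (P.1 - Q.1) ^ 2 + (P.2.1 - Q.2.1) ^ 2 + (P.2.2 - Q.2.2) ^ 2 = 2 * t := by
    linear_combination h2 + 2 * ht
  have hB : (P.1 - R.1) ^ 2 + (P.2.1 - R.2.1) ^ 2 + (P.2.2 - R.2.2) ^ 2 = 2 * t := by
    linear_combination (-1 : ℤ) * h1 + 2 * ht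
  obtain ⟨a1, ha1⟩ : ∃ x, P.1 - Q.1 = x := ⟨_, rfl⟩
  obtain ⟨a2, ha2⟩ : ∃ x, P.2.1 - Q.2.1 = x := ⟨_, rfl⟩
  obtain ⟨a3, ha3⟩ : ∃ x, P.2.2 - Q.2.2 = x := ⟨_, rfl⟩
  obtain ⟨c1, hc1⟩ : ∃ x, P.1 - R.1 = x := ⟨_, rfl⟩
  obtain ⟨c2, hc2⟩ : ∃ x, P.2.1 - R.2.1 = x := ⟨_, rfl⟩
  obtain ⟨c3, hc3⟩ : ∃ x, P.2.2 - R.2.2 = x := ⟨_, rfl⟩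
  simp only [ha1, ha2, ha3, hc1, hc2, hc3] at hA hB ht ⊢
  have heq : ((⟨a1, c1⟩ : Eis) + ⟨a2, c2⟩ + ⟨a3, c3⟩) ^ 2
      + 2 * (((⟨a1, c1⟩ : Eis) + ⟨0, 1⟩ * ⟨a2, c2⟩ + ⟨-1, -1⟩ * ⟨a3, c3⟩)
        * ((⟨a1, c1⟩ : Eis) + ⟨-1, -1⟩ * ⟨a2, c2⟩ + ⟨0, 1⟩ * ⟨a3, c3⟩)) = 0 := by
    rw [pow_two, Eis.two_def]
    ext
    · simp only [Eis.add_re, Eis.add_im, Eis.mul_re, Eis.mul_im, Eis.zero_re]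
      linear_combination 3 * hA - 3 * hB
    · simp only [Eis.add_re, Eis.add_im, Eis.mul_re, Eis.mul_im, Eis.zero_im]
      linear_combination 6 * ht - 3 * hB
  have hsum : Eis.norm ((⟨a1, c1⟩ : Eis) + ⟨a2, c2⟩ + ⟨a3, c3⟩)
      + Eis.norm ((⟨a1, c1⟩ : Eis) + ⟨0, 1⟩ * ⟨a2, c2⟩ + ⟨-1, -1⟩ * ⟨a3, c3⟩)
      + Eis.norm ((⟨a1, c1⟩ : Eis) + ⟨-1, -1⟩ * ⟨a2, c2⟩ + ⟨0, 1⟩ * ⟨a3, c3⟩) = 9 * t := by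
    simp only [Eis.norm, Eis.add_re, Eis.add_im, Eis.mul_re, Eis.mul_im]
    linear_combination 3 * hA + 3 * hB - 3 * ht
  obtain ⟨m, n, hmn⟩ := Eis.crux heq hsum
  exact ⟨m, n, by linear_combination hA + 2 * hmn⟩
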